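/- (Descent of the value function along the θ-step.) Assume the μ-PL-in-T assumption and let L₁ = l(1+κ) with κ = l/μ. If L₁·τ ≤ 1 and θ' = θ − τ ∂_θL(θ,T) for some T ∈ L²(P), then φ(θ') − φ(θ) ≤ −(τ/2)‖∂φ(θ)‖² + (τ/2)‖∂_θL(θ,T) − ∂φ(θ)‖². -/

import Mathlib

open MeasureTheory

noncomputable section

open Set Filter

section Aux

variable {F : Type*} [NormedAddCommGroup F] [InnerProductSpace ℝ F] [CompleteSpace F]

lemma line_hasDerivAt (x u : F) (t : ℝ) : HasDerivAt (fun s : ℝ => x + s • u) u t := by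
  simpa using ((hasDerivAt_id t).smul_const u).const_add x

lemma comp_line_hasDerivAt {f : F → ℝ} {g : F → F} (hg : ∀ v, HasGradientAt f (g v) v)
    (x u : F) (t : ℝ) :
    HasDerivAt (fun s : ℝ => f (x + s • u)) (inner ℝ (g (x + t • u)) u : ℝ) t := by
  have h1 := (hg (x + t • u)).hasFDerivAt.comp_hasDerivAt t (line_hasDerivAt x u t)
  exact h1

lemma taylor_upper {f : F → ℝ} {g : F → F} {L : ℝ}
    (hg : ∀ v, HasGradientAt f (g v) v)
    (hlip : ∀ v w, ‖g v - g w‖ ≤ L * ‖v - w‖) (x y : F) :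
    f y ≤ f x + inner ℝ (g x) (y - x) + L / 2 * ‖y - x‖ ^ 2 := by
  set u := y - x with hu
  set r : ℝ → ℝ := fun t => f (x + t • u) - t * inner ℝ (g x) u - L * t ^ 2 / 2 * ‖u‖ ^ 2 with hr
  have hr' : ∀ t : ℝ, HasDerivAt r
      ((inner ℝ (g (x + t • u)) u : ℝ) - inner ℝ (g x) u - L * t * ‖u‖ ^ 2) t := by
    intro t
    have h1 := comp_line_hasDerivAt hg x u t
    have h2 : HasDerivAt (fun t : ℝ => t * (inner ℝ (g x) u : ℝ)) (inner ℝ (g x) u : ℝ) t := by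
      simpa using (hasDerivAt_id t).mul_const (inner ℝ (g x) u : ℝ)
    have h3 : HasDerivAt (fun t : ℝ => L * t ^ 2 / 2 * ‖u‖ ^ 2) (L * t * ‖u‖ ^ 2) t := by
      have := ((hasDerivAt_pow 2 t).const_mul L).div_const 2 |>.mul_const (‖u‖ ^ 2)
      refine this.congr_deriv ?_
      push_cast
      ring
    exact (h1.sub h2).sub h3
  have key : r 1 ≤ r 0 := by
    have hder : ∀ t ∈ interior (Icc (0:ℝ) 1), deriv r t ≤ 0 := by
      intro t ht
      rw [interior_Icc] at ht
      rw [(hr' t).deriv]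
      have h4 : (inner ℝ (g (x + t • u)) u : ℝ) - inner ℝ (g x) u
          = inner ℝ (g (x + t • u) - g x) u := by rw [inner_sub_left]
      rw [h4]
      have h5 : (inner ℝ (g (x + t • u) - g x) u : ℝ) ≤ ‖g (x + t • u) - g x‖ * ‖u‖ :=
        real_inner_le_norm _ _
      have h6 : ‖g (x + t • u) - g x‖ ≤ L * (t * ‖u‖) := by
        have := hlip (x + t • u) x
        simpa [norm_smul, abs_of_pos ht.1, mul_assoc] using this
      nlinarith [norm_nonneg u, norm_nonneg (g (x + t • u) - g x), ht.1.le]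
    have hcont : ContinuousOn r (Icc (0:ℝ) 1) := fun t _ => ((hr' t).continuousAt).continuousWithinAt
    have hdiff : DifferentiableOn ℝ r (interior (Icc (0:ℝ) 1)) :=
      fun t _ => ((hr' t).differentiableAt).differentiableWithinAt
    exact antitoneOn_of_deriv_nonpos (convex_Icc 0 1) hcont hdiff hder
      (by simp : (0:ℝ) ∈ Icc (0:ℝ) 1) (by simp : (1:ℝ) ∈ Icc (0:ℝ) 1) zero_le_one
  have h0 : r 0 = f x := by simp [hr]
  have h1 : r 1 = f y - inner ℝ (g x) u - L / 2 * ‖u‖ ^ 2 := by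
    have hxy : x + (1:ℝ) • u = y := by rw [hu]; simp
    simp only [hr, hxy]
    ring
  rw [h0, h1] at key
  linarith

lemma taylor_lower {f : F → ℝ} {g : F → F} {L : ℝ}
    (hg : ∀ v, HasGradientAt f (g v) v)
    (hlip : ∀ v w, ‖g v - g w‖ ≤ L * ‖v - w‖) (x y : F) :
    f x + inner ℝ (g x) (y - x) - L / 2 * ‖y - x‖ ^ 2 ≤ f y := by
  have hg' : ∀ v, HasGradientAt (fun w => -f w) (-g v) v := by
    intro v
    have := (hg v).hasFDerivAt.neg
    rw [hasGradientAt_iff_hasFDerivAt, map_neg]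
    exact this
  have hlip' : ∀ v w, ‖(-g v) - (-g w)‖ ≤ L * ‖v - w‖ := by
    intro v w
    have h : -g v - -g w = g w - g v := by abel
    rw [h, norm_sub_rev]
    exact hlip v w
  have := taylor_upper hg' hlip' x y
  simp only [inner_neg_left] at this
  linarith


lemma grad_eq_zero_of_isMax {f : F → ℝ} {g v : F} (hg : HasGradientAt f g v)
    (hm : ∀ w, f w ≤ f v) : g = 0 := by
  have h : IsLocalMax f v := Filter.Eventually.of_forall hm
  have h2 := h.hasFDerivAt_eq_zero hg.hasFDerivAt
  apply (InnerProductSpace.toDual ℝ F).injective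
  rw [h2, map_zero]

lemma sqrt_pow_nat (x : ℝ) (hx : 0 ≤ x) (n : ℕ) : Real.sqrt (x ^ n) = Real.sqrt x ^ n := by
  induction n with
  | zero => simp
  | succ m ih => rw [pow_succ, pow_succ, Real.sqrt_mul (pow_nonneg hx m), ih]

/-- Fixed-step gradient ascent bound: for small step η, the distance from `v₀` to the
unique maximizer `vs` is controlled by `√(f vs - f v₀)`. -/
lemma pl_dist_bound {f : F → ℝ} {g : F → F} {L μ : ℝ} (hL : 0 < L) (hμ : 0 < μ)
    (hg : ∀ v, HasGradientAt f (g v) v)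
    (hlip : ∀ v w, ‖g v - g w‖ ≤ L * ‖v - w‖)
    {vs : F} (hmaxx : ∀ v, f v ≤ f vs)
    (huniq : ∀ v, (∀ w, f w ≤ f v) → v = vs)
    (hPL : ∀ v, μ * (f vs - f v) ≤ 1 / 2 * ‖g v‖ ^ 2)
    (v₀ : F) {η : ℝ} (hη0 : 0 < η) (hηL : η ≤ 1 / L) (hημ : η ≤ 1 / (2 * μ)) :
    ‖v₀ - vs‖ * ((1 - η * (L / 2)) * Real.sqrt (μ / 2)) ≤ Real.sqrt (f vs - f v₀) := by
  -- basic positivity facts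
  have hfac : 1 / 2 ≤ 1 - η * (L / 2) := by
    have : η * L ≤ 1 := by
      rw [le_div_iff₀ hL] at hηL; linarith
    linarith
  have hfacpos : 0 < 1 - η * (L / 2) := lt_of_lt_of_le (by norm_num) hfac
  obtain ⟨c, hc⟩ : ∃ c : ℝ, c = (1 - η * (L / 2)) * Real.sqrt (μ / 2) := ⟨_, rfl⟩
  have hcpos : 0 < c := by
    rw [hc]
    apply mul_pos hfacpos
    exact Real.sqrt_pos.2 (by linarith)
  -- the ascent sequence
  obtain ⟨v, hv⟩ : ∃ v : ℕ → F, v = fun k => (fun w => w + η • g w)^[k] v₀ := ⟨_, rfl⟩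
  have hvsucc : ∀ k, v (k + 1) = v k + η • g (v k) := by
    intro k
    simp only [hv, Function.iterate_succ_apply']
  obtain ⟨Δ, hΔ⟩ : ∃ Δ : ℕ → ℝ, Δ = fun k => f vs - f (v k) := ⟨_, rfl⟩
  have hΔnn : ∀ k, 0 ≤ Δ k := fun k => by simp [hΔ, hmaxx (v k)]
  -- one-step ascent
  have hstep : ∀ k, Δ (k + 1) ≤ Δ k - η * (1 - η * (L / 2)) * ‖g (v k)‖ ^ 2 := by
    intro k
    have h1 := taylor_lower hg hlip (v k) (v (k + 1))
    rw [hvsucc k] at h1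
    simp only [add_sub_cancel_left] at h1
    rw [real_inner_smul_right, real_inner_self_eq_norm_sq, norm_smul] at h1
    have hee : ‖η‖ = η := abs_of_pos hη0
    rw [hee] at h1
    simp only [hΔ]
    rw [hvsucc k]
    nlinarith [norm_nonneg (g (v k))]
  have hdec : ∀ k, Δ (k + 1) ≤ Δ k := by
    intro k
    have h1 := hstep k
    have h2 : 0 ≤ η * (1 - η * (L / 2)) * ‖g (v k)‖ ^ 2 :=
      mul_nonneg (mul_nonneg hη0.le hfacpos.le) (sq_nonneg _)
    exact h1.trans (sub_le_self _ h2)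
  -- geometric decay
  obtain ⟨q, hqdef⟩ : ∃ q : ℝ, q = 1 - 2 * μ * η * (1 - η * (L / 2)) := ⟨_, rfl⟩
  have hq0 : 0 ≤ q := by
    have h1 : 2 * μ * η ≤ 1 := by
      rw [le_div_iff₀ (by linarith : (0:ℝ) < 2 * μ)] at hημ
      linarith [hημ]
    have h2 : 1 - η * (L / 2) ≤ 1 := by nlinarith
    simp only [hqdef]
    nlinarith [mul_nonneg (mul_nonneg (by linarith : (0:ℝ) ≤ 2 * μ) hη0.le) hfacpos.le]
  have hq1 : q < 1 := by
    simp only [hqdef]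
    nlinarith [mul_pos (mul_pos (by linarith : (0:ℝ) < 2 * μ) hη0) hfacpos]
  have hgeo : ∀ k, Δ (k + 1) ≤ q * Δ k := by
    intro k
    have h1 := hstep k
    have h2 := hPL (v k)
    have h3 : 2 * μ * Δ k ≤ ‖g (v k)‖ ^ 2 := by simp only [hΔ]; linarith
    have h4 : η * (1 - η * (L / 2)) * (2 * μ * Δ k) ≤ η * (1 - η * (L / 2)) * ‖g (v k)‖ ^ 2 :=
      mul_le_mul_of_nonneg_left h3 (by positivity)
    simp only [hqdef]
    nlinarith
  have hΔle : ∀ k, Δ k ≤ q ^ k * Δ 0 := by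
    intro k
    induction k with
    | zero => simp
    | succ n ih =>
      calc Δ (n + 1) ≤ q * Δ n := hgeo n
        _ ≤ q * (q ^ n * Δ 0) := mul_le_mul_of_nonneg_left ih hq0
        _ = q ^ (n + 1) * Δ 0 := by ring
  -- sqrt telescoping
  have htel : ∀ k, c * ‖v (k + 1) - v k‖ ≤ Real.sqrt (Δ k) - Real.sqrt (Δ (k + 1)) := by
    intro k
    by_cases hz : Δ k = 0
    · -- v k is a maximizer; gradient zero, nothing moves
      have hmk : ∀ w, f w ≤ f (v k) := by
        intro w
        have : f (v k) = f vs := by simp only [hΔ] at hz; linarith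
        rw [this]; exact hmaxx w
      have hg0 : g (v k) = 0 := grad_eq_zero_of_isMax (hg (v k)) hmk
      have hΔk1 : Δ (k + 1) = 0 := le_antisymm (by rw [← hz]; exact hdec k) (hΔnn _)
      rw [hvsucc k, hg0, hz, hΔk1]
      simp
    · have hΔpos : 0 < Δ k := lt_of_le_of_ne (hΔnn k) (Ne.symm hz)
      have hsq : Real.sqrt (2 * μ * Δ k) ≤ ‖g (v k)‖ := by
        rw [show ‖g (v k)‖ = Real.sqrt (‖g (v k)‖ ^ 2) by rw [Real.sqrt_sq (norm_nonneg _)]]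
        apply Real.sqrt_le_sqrt
        have := hPL (v k)
        simp only [hΔ]
        nlinarith
      have hsk : 0 < Real.sqrt (Δ k) := Real.sqrt_pos.2 hΔpos
      have hsmono : Real.sqrt (Δ (k + 1)) ≤ Real.sqrt (Δ k) := Real.sqrt_le_sqrt (hdec k)
      -- multiply both sides by 2 √(Δ k)
      rw [← mul_le_mul_iff_left₀ (by linarith : (0:ℝ) < 2 * Real.sqrt (Δ k))]
      have hprod : (Real.sqrt (Δ k) - Real.sqrt (Δ (k + 1))) * (Real.sqrt (Δ k) + Real.sqrt (Δ (k + 1)))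
          = Δ k - Δ (k + 1) := by
        have e1 : Real.sqrt (Δ k) * Real.sqrt (Δ k) = Δ k := Real.mul_self_sqrt (hΔnn k)
        have e2 : Real.sqrt (Δ (k + 1)) * Real.sqrt (Δ (k + 1)) = Δ (k + 1) :=
          Real.mul_self_sqrt (hΔnn _)
        have e3 : (Real.sqrt (Δ k) - Real.sqrt (Δ (k + 1))) * (Real.sqrt (Δ k) + Real.sqrt (Δ (k + 1)))
            = Real.sqrt (Δ k) * Real.sqrt (Δ k) - Real.sqrt (Δ (k + 1)) * Real.sqrt (Δ (k + 1)) := by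
          ring
        rw [e3, e1, e2]
      have hub : (Real.sqrt (Δ k) - Real.sqrt (Δ (k + 1))) * (Real.sqrt (Δ k) + Real.sqrt (Δ (k + 1)))
          ≤ (Real.sqrt (Δ k) - Real.sqrt (Δ (k + 1))) * (2 * Real.sqrt (Δ k)) := by
        apply mul_le_mul_of_nonneg_left _ (by linarith)
        linarith [Real.sqrt_nonneg (Δ (k + 1))]
      have hlb : η * (1 - η * (L / 2)) * ‖g (v k)‖ ^ 2 ≤ Δ k - Δ (k + 1) := by
        have := hstep k; linarith
      have hgs : Real.sqrt (2 * μ * Δ k) = 2 * Real.sqrt (μ / 2) * Real.sqrt (Δ k) := by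
        have e : (2 * Real.sqrt (μ / 2) * Real.sqrt (Δ k)) ^ 2 = 2 * μ * Δ k := by
          rw [mul_pow, mul_pow, Real.sq_sqrt (by linarith : (0:ℝ) ≤ μ / 2),
            Real.sq_sqrt (hΔnn k)]
          ring
        rw [← e, Real.sqrt_sq (by positivity)]
      -- chain
      have hstepnorm : ‖v (k + 1) - v k‖ = η * ‖g (v k)‖ := by
        rw [hvsucc k]
        simp [norm_smul, abs_of_pos hη0]
      rw [hstepnorm]
      calc c * (η * ‖g (v k)‖) * (2 * Real.sqrt (Δ k))
          = η * (1 - η * (L / 2)) * ‖g (v k)‖ * (2 * Real.sqrt (μ / 2) * Real.sqrt (Δ k)) := by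
            simp only [hc]; ring
        _ ≤ η * (1 - η * (L / 2)) * ‖g (v k)‖ * ‖g (v k)‖ := by
            apply mul_le_mul_of_nonneg_left _ (by positivity)
            rw [← hgs]; exact hsq
        _ = η * (1 - η * (L / 2)) * ‖g (v k)‖ ^ 2 := by ring
        _ ≤ Δ k - Δ (k + 1) := hlb
        _ = (Real.sqrt (Δ k) - Real.sqrt (Δ (k + 1))) * (Real.sqrt (Δ k) + Real.sqrt (Δ (k + 1))) :=
            hprod.symm
        _ ≤ (Real.sqrt (Δ k) - Real.sqrt (Δ (k + 1))) * (2 * Real.sqrt (Δ k)) := hub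
  -- partial-sum bound
  have hsum : ∀ n, c * ‖v n - v₀‖ ≤ Real.sqrt (Δ 0) := by
    intro n
    have h1 : v n - v₀ = ∑ k ∈ Finset.range n, (v (k + 1) - v k) := by
      rw [Finset.sum_range_sub (fun k => v k)]
      simp [hv]
    have h2 : ‖v n - v₀‖ ≤ ∑ k ∈ Finset.range n, ‖v (k + 1) - v k‖ := by
      rw [h1]; exact norm_sum_le _ _
    have h3 : c * ∑ k ∈ Finset.range n, ‖v (k + 1) - v k‖
        ≤ ∑ k ∈ Finset.range n, (Real.sqrt (Δ k) - Real.sqrt (Δ (k + 1))) := by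
      rw [Finset.mul_sum]
      exact Finset.sum_le_sum fun k _ => htel k
    rw [Finset.sum_range_sub' (fun k => Real.sqrt (Δ k))] at h3
    have h4 : Real.sqrt (Δ 0) - Real.sqrt (Δ n) ≤ Real.sqrt (Δ 0) := by
      linarith [Real.sqrt_nonneg (Δ n)]
    calc c * ‖v n - v₀‖ ≤ c * ∑ k ∈ Finset.range n, ‖v (k + 1) - v k‖ :=
          mul_le_mul_of_nonneg_left h2 hcpos.le
      _ ≤ Real.sqrt (Δ 0) - Real.sqrt (Δ n) := h3
      _ ≤ Real.sqrt (Δ 0) := h4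
  -- Cauchy and limit
  have hgeom : ∀ n, dist (v n) (v (n + 1)) ≤ (Real.sqrt (Δ 0) / c) * Real.sqrt q ^ n := by
    intro n
    have h1 := htel n
    have h2 : Real.sqrt (Δ n) ≤ Real.sqrt q ^ n * Real.sqrt (Δ 0) := by
      rw [← sqrt_pow_nat q hq0 n, ← Real.sqrt_mul (pow_nonneg hq0 n)]
      exact Real.sqrt_le_sqrt (hΔle n)
    have h3 : c * dist (v n) (v (n + 1)) ≤ Real.sqrt (Δ n) := by
      rw [dist_eq_norm, norm_sub_rev]
      linarith [Real.sqrt_nonneg (Δ (n + 1)), h1]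
    rw [← mul_le_mul_iff_right₀ hcpos]
    calc c * dist (v n) (v (n + 1)) ≤ Real.sqrt (Δ n) := h3
      _ ≤ Real.sqrt q ^ n * Real.sqrt (Δ 0) := h2
      _ = c * ((Real.sqrt (Δ 0) / c) * Real.sqrt q ^ n) := by field_simp
  have hrlt : Real.sqrt q < 1 := by
    rw [show (1:ℝ) = Real.sqrt 1 by simp]
    exact Real.sqrt_lt_sqrt hq0 hq1
  have hcauchy : CauchySeq v := cauchySeq_of_le_geometric _ _ hrlt hgeom
  obtain ⟨w, hw⟩ := cauchySeq_tendsto_of_complete hcauchy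
  -- the limit is vs
  have hfcont : Continuous f := by
    rw [continuous_iff_continuousAt]
    exact fun x => (hg x).hasFDerivAt.differentiableAt.continuousAt
  have hΔ0 : Tendsto Δ atTop (nhds 0) := by
    apply squeeze_zero hΔnn hΔle
    rw [show (0:ℝ) = 0 * Δ 0 by ring]
    exact (tendsto_pow_atTop_nhds_zero_of_lt_one hq0 hq1).mul_const (Δ 0)
  have hfw : f w = f vs := by
    have h1 : Tendsto (fun n => f (v n)) atTop (nhds (f w)) := (hfcont.tendsto w).comp hw
    have h2 : Tendsto (fun n => f (v n)) atTop (nhds (f vs)) := by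
      have : (fun n => f (v n)) = fun n => f vs - Δ n := by
        funext n; simp [hΔ]
      rw [this]
      simpa using (tendsto_const_nhds (x := f vs)).sub hΔ0
    exact tendsto_nhds_unique h1 h2
  have hwvs : w = vs := by
    apply huniq
    intro u
    rw [hfw]; exact hmaxx u
  -- conclude
  have hlim : Tendsto (fun n => c * ‖v n - v₀‖) atTop (nhds (c * ‖w - v₀‖)) := by
    have h1 : Tendsto (fun n => v n - v₀) atTop (nhds (w - v₀)) := hw.sub_const v₀
    exact (h1.norm).const_mul c
  have hfinal : c * ‖w - v₀‖ ≤ Real.sqrt (Δ 0) :=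
    le_of_tendsto hlim (Eventually.of_forall hsum)
  rw [hwvs] at hfinal
  rw [norm_sub_rev] at hfinal
  simp only [hΔ] at hfinal
  rw [← hc]
  calc ‖v₀ - vs‖ * c = c * ‖v₀ - vs‖ := by ring
    _ ≤ Real.sqrt (f vs - f (v 0)) := by
        convert hfinal using 3
    _ = Real.sqrt (f vs - f v₀) := by simp [hv]

lemma pl_quadratic_growth {f : F → ℝ} {g : F → F} {L μ : ℝ} (hL : 0 < L) (hμ : 0 < μ)
    (hg : ∀ v, HasGradientAt f (g v) v)
    (hlip : ∀ v w, ‖g v - g w‖ ≤ L * ‖v - w‖)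
    {vs : F} (hmaxx : ∀ v, f v ≤ f vs)
    (huniq : ∀ v, (∀ w, f w ≤ f v) → v = vs)
    (hPL : ∀ v, μ * (f vs - f v) ≤ 1 / 2 * ‖g v‖ ^ 2)
    (v₀ : F) : μ / 2 * ‖v₀ - vs‖ ^ 2 ≤ f vs - f v₀ := by
  obtain ⟨ε, hεdef⟩ : ∃ e : ℝ, e = min (1 / L) (1 / (2 * μ)) := ⟨_, rfl⟩
  have hε : 0 < ε := by
    rw [hεdef]
    exact lt_min (by positivity) (by positivity)
  have key : ∀ n : ℕ, ‖v₀ - vs‖ * ((1 - (ε / (n + 1)) * (L / 2)) * Real.sqrt (μ / 2))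
      ≤ Real.sqrt (f vs - f v₀) := by
    intro n
    have hn1 : (1:ℝ) ≤ (n:ℝ) + 1 := by exact_mod_cast Nat.one_le_iff_ne_zero.2 (Nat.succ_ne_zero n)
    have hd : ε / ((n:ℝ) + 1) ≤ ε := div_le_self hε.le hn1
    refine pl_dist_bound hL hμ hg hlip hmaxx huniq hPL v₀ (by positivity) ?_ ?_
    · exact hd.trans (hεdef ▸ min_le_left _ _)
    · exact hd.trans (hεdef ▸ min_le_right _ _)
  have htend : Filter.Tendsto
      (fun n : ℕ => ‖v₀ - vs‖ * ((1 - (ε / (n + 1)) * (L / 2)) * Real.sqrt (μ / 2)))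
      Filter.atTop (nhds (‖v₀ - vs‖ * ((1 - 0 * (L / 2)) * Real.sqrt (μ / 2)))) := by
    apply Filter.Tendsto.const_mul
    apply Filter.Tendsto.mul_const
    apply Filter.Tendsto.const_sub
    apply Filter.Tendsto.mul_const
    exact tendsto_const_nhds.div_atTop
      (Filter.tendsto_atTop_add_const_right _ 1 tendsto_natCast_atTop_atTop)
  have hle : ‖v₀ - vs‖ * Real.sqrt (μ / 2) ≤ Real.sqrt (f vs - f v₀) := by
    have := le_of_tendsto htend (Filter.Eventually.of_forall key)
    simpa using this
  have h0 : 0 ≤ f vs - f v₀ := by linarith [hmaxx v₀]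
  have hsq := mul_self_le_mul_self (by positivity) hle
  rw [Real.mul_self_sqrt h0] at hsq
  have e : ‖v₀ - vs‖ * Real.sqrt (μ / 2) * (‖v₀ - vs‖ * Real.sqrt (μ / 2))
      = μ / 2 * ‖v₀ - vs‖ ^ 2 := by
    have := Real.mul_self_sqrt (show (0:ℝ) ≤ μ / 2 by linarith)
    nlinarith [this]
  linarith [e ▸ hsq]

lemma maximizer_dist_le {f₁ f₂ : F → ℝ} {g₁ g₂ : F → F} {L μ D : ℝ} (hL : 0 < L) (hμ : 0 < μ)
    (hg₁ : ∀ v, HasGradientAt f₁ (g₁ v) v)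
    (hg₂ : ∀ v, HasGradientAt f₂ (g₂ v) v)
    (hlip₂ : ∀ v w, ‖g₂ v - g₂ w‖ ≤ L * ‖v - w‖)
    {vs₁ vs₂ : F} (hmax₁ : ∀ v, f₁ v ≤ f₁ vs₁) (hmax₂ : ∀ v, f₂ v ≤ f₂ vs₂)
    (huniq₂ : ∀ v, (∀ w, f₂ w ≤ f₂ v) → v = vs₂)
    (hPL₂ : ∀ v, μ * (f₂ vs₂ - f₂ v) ≤ 1 / 2 * ‖g₂ v‖ ^ 2)
    (hD : ‖g₂ vs₁ - g₁ vs₁‖ ≤ D) :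
    ‖vs₂ - vs₁‖ ≤ D / μ := by
  have h1 : g₁ vs₁ = 0 := grad_eq_zero_of_isMax (hg₁ vs₁) hmax₁
  have h2 : ‖g₂ vs₁‖ ≤ D := by
    have : g₂ vs₁ - g₁ vs₁ = g₂ vs₁ := by rw [h1, sub_zero]
    rwa [this] at hD
  have hDnn : 0 ≤ D := le_trans (norm_nonneg _) h2
  have hQG := pl_quadratic_growth hL hμ hg₂ hlip₂ hmax₂ huniq₂ hPL₂ vs₁
  have hPLa := hPL₂ vs₁
  have h3 : ‖g₂ vs₁‖ ^ 2 ≤ D ^ 2 := by nlinarith [norm_nonneg (g₂ vs₁)]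
  have h5 : ‖vs₂ - vs₁‖ ^ 2 ≤ (D / μ) ^ 2 := by
    rw [norm_sub_rev, div_pow, le_div_iff₀ (by positivity)]
    nlinarith [mul_le_mul_of_nonneg_left hQG hμ.le]
  calc ‖vs₂ - vs₁‖ = Real.sqrt (‖vs₂ - vs₁‖ ^ 2) := (Real.sqrt_sq (norm_nonneg _)).symm
    _ ≤ Real.sqrt ((D / μ) ^ 2) := Real.sqrt_le_sqrt h5
    _ = D / μ := Real.sqrt_sq (by positivity)

lemma sqrt_add_sq_le_add {a b : ℝ} (ha : 0 ≤ a) (hb : 0 ≤ b) :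
    Real.sqrt (a ^ 2 + b ^ 2) ≤ a + b := by
  calc Real.sqrt (a ^ 2 + b ^ 2) ≤ Real.sqrt ((a + b) ^ 2) := by
        apply Real.sqrt_le_sqrt; nlinarith [mul_nonneg ha hb]
    _ = a + b := Real.sqrt_sq (by linarith)

lemma left_le_sqrt_add_sq {a : ℝ} (b : ℝ) (ha : 0 ≤ a) : a ≤ Real.sqrt (a ^ 2 + b ^ 2) := by
  calc a = Real.sqrt (a ^ 2) := (Real.sqrt_sq ha).symm
    _ ≤ Real.sqrt (a ^ 2 + b ^ 2) := by apply Real.sqrt_le_sqrt; nlinarith [sq_nonneg b]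

lemma right_le_sqrt_add_sq (a : ℝ) {b : ℝ} (hb : 0 ≤ b) : b ≤ Real.sqrt (a ^ 2 + b ^ 2) := by
  calc b = Real.sqrt (b ^ 2) := (Real.sqrt_sq hb).symm
    _ ≤ Real.sqrt (a ^ 2 + b ^ 2) := by apply Real.sqrt_le_sqrt; nlinarith [sq_nonneg a]

lemma HasGradientAt.sub' {f₁ f₂ : F → ℝ} {a b v : F}
    (h₁ : HasGradientAt f₁ a v) (h₂ : HasGradientAt f₂ b v) :
    HasGradientAt (fun w => f₁ w - f₂ w) (a - b) v := by
  rw [hasGradientAt_iff_hasFDerivAt] at *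
  have h := h₁.sub h₂
  rw [map_sub]
  exact h

lemma hasGradientAt_quad (γ : ℝ) (x v : F) :
    HasGradientAt (fun w => ‖w - x‖ ^ 2 / (2 * γ)) (γ⁻¹ • (v - x)) v := by
  have hid : HasFDerivAt (fun w : F => w - x) (ContinuousLinearMap.id ℝ F) v :=
    (hasFDerivAt_id v).sub_const x
  have h1 := (hid.inner ℝ hid).const_smul ((2 * γ)⁻¹ : ℝ)
  have h2 : (fun w : F => ‖w - x‖ ^ 2 / (2 * γ))
      = fun w => (2 * γ)⁻¹ • (inner ℝ (w - x) (w - x) : ℝ) := by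
    funext w; rw [real_inner_self_eq_norm_sq, smul_eq_mul, inv_mul_eq_div]
  rw [hasGradientAt_iff_hasFDerivAt, h2]
  refine h1.congr_fderiv ?_
  ext w
  simp only [InnerProductSpace.toDual_apply_apply, ContinuousLinearMap.coe_comp', Function.comp_apply,
    ContinuousLinearMap.coe_smul', Pi.smul_apply, ContinuousLinearMap.prod_apply,
    ContinuousLinearMap.coe_id', id_eq, fderivInnerCLM_apply, real_inner_smul_left,
    smul_eq_mul]
  rw [real_inner_comm w (v - x)]
  by_cases hγ : γ = 0
  · simp [hγ]
  · field_simp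
    ring

lemma sum_range_add_one (n : ℕ) :
    ∑ i ∈ Finset.range n, ((i : ℝ) + 1) = (n : ℝ) * ((n : ℝ) + 1) / 2 := by
  induction n with
  | zero => simp
  | succ m ih =>
    rw [Finset.sum_range_succ, ih]
    push_cast
    ring

section Segment

variable {E : Type*} [NormedAddCommGroup E] [InnerProductSpace ℝ E] [CompleteSpace E]

lemma hstar_segment_bound
    (ℓ : E → F → ℝ) (gθ : E → F → E) (gv : E → F → F) (γ l₀ μ : ℝ)
    (hl₀ : 0 ≤ l₀) (hγ : 0 < γ) (hμ : 0 < μ)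
    (hgθ : ∀ a v, HasGradientAt (fun a' => ℓ a' v) (gθ a v) a)
    (hgv : ∀ a v, HasGradientAt (fun v' => ℓ a v') (gv a v) v)
    (hsmooth : ∀ a v a' v',
      Real.sqrt (‖gθ a' v' - gθ a v‖ ^ 2 + ‖gv a' v' - gv a v‖ ^ 2)
        ≤ l₀ * Real.sqrt (‖a' - a‖ ^ 2 + ‖v' - v‖ ^ 2))
    (x : F) (vst : E → F) (θ θ' : E) (S : Set E)
    (hmaxS : ∀ a ∈ S, ∀ v : F,
      ℓ a v - ‖v - x‖ ^ 2 / (2 * γ) ≤ ℓ a (vst a) - ‖vst a - x‖ ^ 2 / (2 * γ))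
    (huniqS : ∀ a ∈ S, ∀ v : F,
      (∀ w, ℓ a w - ‖w - x‖ ^ 2 / (2 * γ) ≤ ℓ a v - ‖v - x‖ ^ 2 / (2 * γ)) → v = vst a)
    (hPLS : ∀ a ∈ S, ∀ v : F,
      μ * ((ℓ a (vst a) - ‖vst a - x‖ ^ 2 / (2 * γ)) - (ℓ a v - ‖v - x‖ ^ 2 / (2 * γ)))
        ≤ 1 / 2 * ‖gv a v - γ⁻¹ • (v - x)‖ ^ 2)
    (hθS : ∀ n i : ℕ, i ≤ n → θ + ((i : ℝ) / (n : ℝ)) • (θ' - θ) ∈ S) :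
    (ℓ θ' (vst θ') - ‖vst θ' - x‖ ^ 2 / (2 * γ)) - (ℓ θ (vst θ) - ‖vst θ - x‖ ^ 2 / (2 * γ))
      ≤ inner ℝ (gθ θ (vst θ)) (θ' - θ) + l₀ * (1 + l₀ / μ) / 2 * ‖θ' - θ‖ ^ 2 := by
  have hθmem : θ ∈ S := by simpa using hθS 1 0 (by norm_num)
  have hθ'mem : θ' ∈ S := by
    have := hθS 1 1 le_rfl
    norm_num at this
    simpa using this
  have hl : 0 < l₀ + γ⁻¹ := by positivity
  -- derived smoothness estimates
  have hgθθ : ∀ (v : F) (a b : E), ‖gθ b v - gθ a v‖ ≤ l₀ * ‖b - a‖ := by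
    intro v a b
    calc ‖gθ b v - gθ a v‖
        ≤ Real.sqrt (‖gθ b v - gθ a v‖ ^ 2 + ‖gv b v - gv a v‖ ^ 2) :=
          left_le_sqrt_add_sq _ (norm_nonneg _)
      _ ≤ l₀ * Real.sqrt (‖b - a‖ ^ 2 + ‖v - v‖ ^ 2) := hsmooth a v b v
      _ = l₀ * ‖b - a‖ := by rw [sub_self, norm_zero]; norm_num [Real.sqrt_sq (norm_nonneg _)]
  have hgvθ : ∀ (v : F) (a b : E), ‖gv b v - gv a v‖ ≤ l₀ * ‖b - a‖ := by
    intro v a b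
    calc ‖gv b v - gv a v‖
        ≤ Real.sqrt (‖gθ b v - gθ a v‖ ^ 2 + ‖gv b v - gv a v‖ ^ 2) :=
          right_le_sqrt_add_sq _ (norm_nonneg _)
      _ ≤ l₀ * Real.sqrt (‖b - a‖ ^ 2 + ‖v - v‖ ^ 2) := hsmooth a v b v
      _ = l₀ * ‖b - a‖ := by rw [sub_self, norm_zero]; norm_num [Real.sqrt_sq (norm_nonneg _)]
  have hgvv : ∀ (a : E) (v w : F), ‖gv a w - gv a v‖ ≤ l₀ * ‖w - v‖ := by
    intro a v w
    calc ‖gv a w - gv a v‖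
        ≤ Real.sqrt (‖gθ a w - gθ a v‖ ^ 2 + ‖gv a w - gv a v‖ ^ 2) :=
          right_le_sqrt_add_sq _ (norm_nonneg _)
      _ ≤ l₀ * Real.sqrt (‖a - a‖ ^ 2 + ‖w - v‖ ^ 2) := hsmooth a v a w
      _ = l₀ * ‖w - v‖ := by rw [sub_self, norm_zero]; norm_num [Real.sqrt_sq (norm_nonneg _)]
  have hgθj : ∀ (a : E) (v : F) (b : E) (w : F),
      ‖gθ b w - gθ a v‖ ≤ l₀ * ‖b - a‖ + l₀ * ‖w - v‖ := by
    intro a v b w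
    calc ‖gθ b w - gθ a v‖
        ≤ Real.sqrt (‖gθ b w - gθ a v‖ ^ 2 + ‖gv b w - gv a v‖ ^ 2) :=
          left_le_sqrt_add_sq _ (norm_nonneg _)
      _ ≤ l₀ * Real.sqrt (‖b - a‖ ^ 2 + ‖w - v‖ ^ 2) := hsmooth a v b w
      _ ≤ l₀ * (‖b - a‖ + ‖w - v‖) :=
          mul_le_mul_of_nonneg_left (sqrt_add_sq_le_add (norm_nonneg _) (norm_nonneg _)) hl₀
      _ = l₀ * ‖b - a‖ + l₀ * ‖w - v‖ := by ring
  -- gradients of the inner objective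
  have hfgrad : ∀ (a : E) (v : F),
      HasGradientAt (fun w => ℓ a w - ‖w - x‖ ^ 2 / (2 * γ)) (gv a v - γ⁻¹ • (v - x)) v :=
    fun a v => (hgv a v).sub' (hasGradientAt_quad γ x v)
  have hglip : ∀ (a : E) (v w : F),
      ‖(gv a v - γ⁻¹ • (v - x)) - (gv a w - γ⁻¹ • (w - x))‖ ≤ (l₀ + γ⁻¹) * ‖v - w‖ := by
    intro a v w
    have h1 : (gv a v - γ⁻¹ • (v - x)) - (gv a w - γ⁻¹ • (w - x))
        = (gv a v - gv a w) - γ⁻¹ • (v - w) := by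
      rw [smul_sub, smul_sub, smul_sub]
      abel
    rw [h1]
    calc ‖(gv a v - gv a w) - γ⁻¹ • (v - w)‖
        ≤ ‖gv a v - gv a w‖ + ‖γ⁻¹ • (v - w)‖ := norm_sub_le _ _
      _ ≤ l₀ * ‖v - w‖ + γ⁻¹ * ‖v - w‖ := by
          gcongr
          · exact hgvv a w v
          · rw [norm_smul, Real.norm_eq_abs, abs_of_pos (by positivity)]
      _ = (l₀ + γ⁻¹) * ‖v - w‖ := by ring
  -- Lipschitz continuity of the maximizer on S
  have hvlip : ∀ a ∈ S, ∀ b ∈ S, ‖vst b - vst a‖ ≤ l₀ / μ * ‖b - a‖ := by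
    intro a ha b hb
    have hD : ‖(gv b (vst a) - γ⁻¹ • (vst a - x)) - (gv a (vst a) - γ⁻¹ • (vst a - x))‖
        ≤ l₀ * ‖b - a‖ := by
      have e : (gv b (vst a) - γ⁻¹ • (vst a - x)) - (gv a (vst a) - γ⁻¹ • (vst a - x))
          = gv b (vst a) - gv a (vst a) := by abel
      rw [e]
      exact hgvθ (vst a) a b
    have := maximizer_dist_le (μ := μ) hl hμ
      (hfgrad a) (hfgrad b) (hglip b)
      (hmaxS a ha) (hmaxS b hb) (huniqS b hb) (hPLS b hb) hD
    calc ‖vst b - vst a‖ ≤ l₀ * ‖b - a‖ / μ := this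
      _ = l₀ / μ * ‖b - a‖ := by ring
  -- one-step Danskin bound
  have hstep : ∀ a ∈ S, ∀ b ∈ S,
      (ℓ b (vst b) - ‖vst b - x‖ ^ 2 / (2 * γ)) - (ℓ a (vst a) - ‖vst a - x‖ ^ 2 / (2 * γ))
        ≤ inner ℝ (gθ a (vst b)) (b - a) + l₀ / 2 * ‖b - a‖ ^ 2 := by
    intro a ha b hb
    have h1 := hmaxS a ha (vst b)
    have h2 : ℓ b (vst b) ≤ ℓ a (vst b) + inner ℝ (gθ a (vst b)) (b - a) + l₀ / 2 * ‖b - a‖ ^ 2 :=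
      taylor_upper (fun a' => hgθ a' (vst b)) (fun p q => hgθθ (vst b) q p) a b
    linarith
  obtain ⟨c, hcdef⟩ : ∃ c : ℝ, c = l₀ / μ := ⟨_, rfl⟩
  have hc0 : 0 ≤ c := by rw [hcdef]; positivity
  obtain ⟨X, hXdef⟩ : ∃ X : ℝ, X = inner ℝ (gθ θ (vst θ)) (θ' - θ) := ⟨_, rfl⟩
  -- main estimate for each n ≥ 1
  have main : ∀ n : ℕ, 1 ≤ n →
      (ℓ θ' (vst θ') - ‖vst θ' - x‖ ^ 2 / (2 * γ)) - (ℓ θ (vst θ) - ‖vst θ - x‖ ^ 2 / (2 * γ))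
        ≤ X + l₀ * (1 + c) / 2 * ‖θ' - θ‖ ^ 2 + l₀ * (1 + c) * ‖θ' - θ‖ ^ 2 / (n : ℝ) := by
    intro n hn
    have hn0 : (0 : ℝ) < (n : ℝ) := by exact_mod_cast Nat.pos_of_ne_zero (by omega)
    obtain ⟨A, hA⟩ : ∃ A : ℕ → E, A = fun i : ℕ => θ + ((i : ℝ) / (n : ℝ)) • (θ' - θ) :=
      ⟨fun i : ℕ => θ + ((i : ℝ) / (n : ℝ)) • (θ' - θ), rfl⟩
    have hA0 : A 0 = θ := by simp [hA]
    have hAn : A n = θ' := by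
      simp [hA, div_self hn0.ne']
    have hAS : ∀ i, i ≤ n → A i ∈ S := fun i hi => by rw [hA]; exact hθS n i hi
    have hAsub : ∀ i : ℕ, A i - θ = ((i : ℝ) / (n : ℝ)) • (θ' - θ) := by
      intro i; simp [hA]
    have hAnorm : ∀ i : ℕ, ‖A i - θ‖ = (i : ℝ) / (n : ℝ) * ‖θ' - θ‖ := by
      intro i
      rw [hAsub i, norm_smul, Real.norm_eq_abs, abs_of_nonneg (by positivity)]
    have hAstep : ∀ i : ℕ, A (i + 1) - A i = ((1 : ℝ) / (n : ℝ)) • (θ' - θ) := by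
      intro i
      simp only [hA]
      rw [add_sub_add_left_eq_sub, ← sub_smul]
      congr 1
      push_cast
      field_simp
      ring
    -- per-step bound
    have hper : ∀ i, i < n →
        (ℓ (A (i + 1)) (vst (A (i + 1))) - ‖vst (A (i + 1)) - x‖ ^ 2 / (2 * γ))
          - (ℓ (A i) (vst (A i)) - ‖vst (A i) - x‖ ^ 2 / (2 * γ))
        ≤ X / (n : ℝ) + l₀ * (1 + c) * ‖θ' - θ‖ ^ 2 * ((i : ℝ) + 1) / (n : ℝ) ^ 2
          + l₀ / 2 * ‖θ' - θ‖ ^ 2 / (n : ℝ) ^ 2 := by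
      intro i hi
      have hiS : A i ∈ S := hAS i hi.le
      have hi1S : A (i + 1) ∈ S := hAS (i + 1) hi
      have h1 := hstep (A i) hiS (A (i + 1)) hi1S
      rw [hAstep i] at h1
      rw [real_inner_smul_right] at h1
      -- decompose the inner product
      have h2 : (inner ℝ (gθ (A i) (vst (A (i + 1)))) (θ' - θ) : ℝ)
          = X + inner ℝ (gθ (A i) (vst (A (i + 1))) - gθ θ (vst θ)) (θ' - θ) := by
        rw [inner_sub_left, hXdef]; ring
      have h3 : (inner ℝ (gθ (A i) (vst (A (i + 1))) - gθ θ (vst θ)) (θ' - θ) : ℝ)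
          ≤ ‖gθ (A i) (vst (A (i + 1))) - gθ θ (vst θ)‖ * ‖θ' - θ‖ := real_inner_le_norm _ _
      have h4 : ‖gθ (A i) (vst (A (i + 1))) - gθ θ (vst θ)‖
          ≤ l₀ * (1 + c) * (((i : ℝ) + 1) / (n : ℝ)) * ‖θ' - θ‖ := by
        have ha := hgθj θ (vst θ) (A i) (vst (A (i + 1)))
        have hb : ‖vst (A (i + 1)) - vst θ‖ ≤ c * (((i : ℝ) + 1) / (n : ℝ)) * ‖θ' - θ‖ := by
          have := hvlip θ hθmem (A (i + 1)) hi1S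
          rw [hAnorm (i + 1)] at this
          rw [hcdef]
          calc ‖vst (A (i + 1)) - vst θ‖ ≤ l₀ / μ * (((i + 1 : ℕ) : ℝ) / (n : ℝ) * ‖θ' - θ‖) := this
            _ = l₀ / μ * (((i : ℝ) + 1) / (n : ℝ)) * ‖θ' - θ‖ := by push_cast; ring
        have hc' : ‖A i - θ‖ ≤ (((i : ℝ) + 1) / (n : ℝ)) * ‖θ' - θ‖ := by
          rw [hAnorm i]
          apply mul_le_mul_of_nonneg_right _ (norm_nonneg _)
          gcongr
          linarith
        calc ‖gθ (A i) (vst (A (i + 1))) - gθ θ (vst θ)‖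
            ≤ l₀ * ‖A i - θ‖ + l₀ * ‖vst (A (i + 1)) - vst θ‖ := ha
          _ ≤ l₀ * ((((i : ℝ) + 1) / (n : ℝ)) * ‖θ' - θ‖)
              + l₀ * (c * (((i : ℝ) + 1) / (n : ℝ)) * ‖θ' - θ‖) := by gcongr
          _ = l₀ * (1 + c) * (((i : ℝ) + 1) / (n : ℝ)) * ‖θ' - θ‖ := by ring
      have h5 : (inner ℝ (gθ (A i) (vst (A (i + 1))) - gθ θ (vst θ)) (θ' - θ) : ℝ)
          ≤ l₀ * (1 + c) * (((i : ℝ) + 1) / (n : ℝ)) * ‖θ' - θ‖ * ‖θ' - θ‖ :=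
        h3.trans (mul_le_mul_of_nonneg_right h4 (norm_nonneg _))
      rw [h2] at h1
      have h6 : ‖((1 : ℝ) / (n : ℝ)) • (θ' - θ)‖ ^ 2 = ‖θ' - θ‖ ^ 2 / (n : ℝ) ^ 2 := by
        rw [norm_smul, Real.norm_eq_abs, abs_of_nonneg (by positivity), mul_pow]
        ring
      rw [h6] at h1
      have h7 : (1 : ℝ) / (n : ℝ)
            * (X + (inner ℝ (gθ (A i) (vst (A (i + 1))) - gθ θ (vst θ)) (θ' - θ) : ℝ))
          ≤ X / (n : ℝ) + l₀ * (1 + c) * ‖θ' - θ‖ ^ 2 * ((i : ℝ) + 1) / (n : ℝ) ^ 2 := by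
        calc (1 : ℝ) / (n : ℝ)
              * (X + (inner ℝ (gθ (A i) (vst (A (i + 1))) - gθ θ (vst θ)) (θ' - θ) : ℝ))
            = X / (n : ℝ) + (1 / (n : ℝ))
                * (inner ℝ (gθ (A i) (vst (A (i + 1))) - gθ θ (vst θ)) (θ' - θ) : ℝ) := by ring
          _ ≤ X / (n : ℝ) + (1 / (n : ℝ))
                * (l₀ * (1 + c) * (((i : ℝ) + 1) / (n : ℝ)) * ‖θ' - θ‖ * ‖θ' - θ‖) := by
              have := mul_le_mul_of_nonneg_left h5 (by positivity : (0:ℝ) ≤ 1 / (n : ℝ))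
              linarith
          _ = X / (n : ℝ) + l₀ * (1 + c) * ‖θ' - θ‖ ^ 2 * ((i : ℝ) + 1) / (n : ℝ) ^ 2 := by
              ring
      have e8 : l₀ / 2 * (‖θ' - θ‖ ^ 2 / (n : ℝ) ^ 2) = l₀ / 2 * ‖θ' - θ‖ ^ 2 / (n : ℝ) ^ 2 := by
        ring
      rw [e8] at h1
      exact h1.trans (add_le_add_left h7 _)
    -- telescoping sum
    have htel : (ℓ θ' (vst θ') - ‖vst θ' - x‖ ^ 2 / (2 * γ))
          - (ℓ θ (vst θ) - ‖vst θ - x‖ ^ 2 / (2 * γ))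
        = ∑ i ∈ Finset.range n,
            ((ℓ (A (i + 1)) (vst (A (i + 1))) - ‖vst (A (i + 1)) - x‖ ^ 2 / (2 * γ))
              - (ℓ (A i) (vst (A i)) - ‖vst (A i) - x‖ ^ 2 / (2 * γ))) := by
      rw [Finset.sum_range_sub (fun i => ℓ (A i) (vst (A i)) - ‖vst (A i) - x‖ ^ 2 / (2 * γ)),
        hA0, hAn]
    have hsum : ∑ i ∈ Finset.range n,
          ((ℓ (A (i + 1)) (vst (A (i + 1))) - ‖vst (A (i + 1)) - x‖ ^ 2 / (2 * γ))
            - (ℓ (A i) (vst (A i)) - ‖vst (A i) - x‖ ^ 2 / (2 * γ)))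
        ≤ ∑ i ∈ Finset.range n, (X / (n : ℝ)
            + l₀ * (1 + c) * ‖θ' - θ‖ ^ 2 * ((i : ℝ) + 1) / (n : ℝ) ^ 2
            + l₀ / 2 * ‖θ' - θ‖ ^ 2 / (n : ℝ) ^ 2) :=
      Finset.sum_le_sum (fun i hi => hper i (Finset.mem_range.1 hi))
    have hrhs : ∑ i ∈ Finset.range n, (X / (n : ℝ)
            + l₀ * (1 + c) * ‖θ' - θ‖ ^ 2 * ((i : ℝ) + 1) / (n : ℝ) ^ 2
            + l₀ / 2 * ‖θ' - θ‖ ^ 2 / (n : ℝ) ^ 2)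
        = X + l₀ * (1 + c) * ‖θ' - θ‖ ^ 2 * (((n : ℝ) + 1) / (2 * (n : ℝ)))
            + l₀ / 2 * ‖θ' - θ‖ ^ 2 / (n : ℝ) := by
      rw [Finset.sum_add_distrib, Finset.sum_add_distrib, Finset.sum_const, Finset.sum_const,
        Finset.card_range]
      have e1 : ∀ i ∈ Finset.range n, l₀ * (1 + c) * ‖θ' - θ‖ ^ 2 * ((i : ℝ) + 1) / (n : ℝ) ^ 2
          = (l₀ * (1 + c) * ‖θ' - θ‖ ^ 2 / (n : ℝ) ^ 2) * ((i : ℝ) + 1) := fun i _ => by ring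
      rw [Finset.sum_congr rfl e1, ← Finset.mul_sum, sum_range_add_one]
      simp only [nsmul_eq_mul]
      field_simp
    have hfin : X + l₀ * (1 + c) * ‖θ' - θ‖ ^ 2 * (((n : ℝ) + 1) / (2 * (n : ℝ)))
            + l₀ / 2 * ‖θ' - θ‖ ^ 2 / (n : ℝ)
        ≤ X + l₀ * (1 + c) / 2 * ‖θ' - θ‖ ^ 2 + l₀ * (1 + c) * ‖θ' - θ‖ ^ 2 / (n : ℝ) := by
      have e2 : ((n : ℝ) + 1) / (2 * (n : ℝ)) = 1 / 2 + 1 / (2 * (n : ℝ)) := by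
        field_simp
      have e3 : l₀ * (1 + c) * ‖θ' - θ‖ ^ 2 * (1 / 2 + 1 / (2 * (n : ℝ)))
          = l₀ * (1 + c) / 2 * ‖θ' - θ‖ ^ 2
            + l₀ * (1 + c) * ‖θ' - θ‖ ^ 2 / (2 * (n : ℝ)) := by ring
      rw [e2, e3]
      have e4 : l₀ * (1 + c) * ‖θ' - θ‖ ^ 2 / (2 * (n : ℝ)) + l₀ / 2 * ‖θ' - θ‖ ^ 2 / (n : ℝ)
          ≤ l₀ * (1 + c) * ‖θ' - θ‖ ^ 2 / (n : ℝ) := by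
        have h1 : l₀ / 2 * ‖θ' - θ‖ ^ 2 ≤ l₀ * (1 + c) / 2 * ‖θ' - θ‖ ^ 2 := by
          nlinarith [mul_nonneg (mul_nonneg hl₀ hc0) (sq_nonneg ‖θ' - θ‖)]
        calc l₀ * (1 + c) * ‖θ' - θ‖ ^ 2 / (2 * (n : ℝ)) + l₀ / 2 * ‖θ' - θ‖ ^ 2 / (n : ℝ)
            = (l₀ * (1 + c) / 2 * ‖θ' - θ‖ ^ 2 + l₀ / 2 * ‖θ' - θ‖ ^ 2) / (n : ℝ) := by
              field_simp
          _ ≤ (l₀ * (1 + c) / 2 * ‖θ' - θ‖ ^ 2 + l₀ * (1 + c) / 2 * ‖θ' - θ‖ ^ 2) / (n : ℝ) := by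
              gcongr
          _ = l₀ * (1 + c) * ‖θ' - θ‖ ^ 2 / (n : ℝ) := by ring
      linarith
    rw [htel]
    exact le_trans hsum (le_trans (le_of_eq hrhs) hfin)
  -- pass to the limit n → ∞
  have htend : Filter.Tendsto
      (fun n : ℕ => X + l₀ * (1 + c) / 2 * ‖θ' - θ‖ ^ 2 + l₀ * (1 + c) * ‖θ' - θ‖ ^ 2 / (n : ℝ))
      Filter.atTop (nhds (X + l₀ * (1 + c) / 2 * ‖θ' - θ‖ ^ 2 + 0)) :=
    tendsto_const_nhds.add (tendsto_const_nhds.div_atTop tendsto_natCast_atTop_atTop)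
  have hfinal := ge_of_tendsto htend
    (by filter_upwards [Filter.eventually_ge_atTop 1] with n hn using main n hn)
  rw [add_zero] at hfinal
  rw [hXdef, hcdef] at hfinal
  exact hfinal

end Segment

section MeasurePart

open MeasureTheory

variable {d : ℕ} (P : Measure (EuclideanSpace ℝ (Fin d))) [IsProbabilityMeasure P]

lemma lipschitz_continuous_of_norm {G₂ : Type*} [NormedAddCommGroup G₂]
    {G : EuclideanSpace ℝ (Fin d) → G₂} {l₀ : ℝ} (hl₀ : 0 ≤ l₀)
    (hlip : ∀ v w, ‖G v - G w‖ ≤ l₀ * ‖v - w‖) : Continuous G := by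
  have h : LipschitzWith (Real.toNNReal l₀) G := by
    apply LipschitzWith.of_dist_le_mul
    intro v w
    rw [dist_eq_norm, dist_eq_norm]
    calc ‖G v - G w‖ ≤ l₀ * ‖v - w‖ := hlip v w
      _ = Real.toNNReal l₀ * ‖v - w‖ := by rw [Real.coe_toNNReal _ hl₀]
  exact h.continuous

lemma integrable_gcomp {G₂ : Type*} [NormedAddCommGroup G₂] [NormedSpace ℝ G₂]
    {G : EuclideanSpace ℝ (Fin d) → G₂} {l₀ : ℝ} (hl₀ : 0 ≤ l₀)
    (hlip : ∀ v w, ‖G v - G w‖ ≤ l₀ * ‖v - w‖)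
    {T : EuclideanSpace ℝ (Fin d) → EuclideanSpace ℝ (Fin d)} (hT : MemLp T 2 P) :
    Integrable (fun x => G (T x)) P := by
  have hTint : Integrable T P := hT.integrable one_le_two
  have hcont : Continuous G := lipschitz_continuous_of_norm hl₀ hlip
  apply Integrable.mono' ((integrable_const ‖G 0‖).add (hTint.norm.const_mul l₀))
  · exact hcont.comp_aestronglyMeasurable hT.aestronglyMeasurable
  · refine Filter.Eventually.of_forall fun x => ?_
    have h1 : ‖G (T x) - G 0‖ ≤ l₀ * ‖T x‖ := by
      have := hlip (T x) 0
      rwa [sub_zero] at this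
    calc ‖G (T x)‖ = ‖G 0 + (G (T x) - G 0)‖ := by
          congr 1
          abel
      _ ≤ ‖G 0‖ + ‖G (T x) - G 0‖ := norm_add_le _ _
      _ ≤ ‖G 0‖ + l₀ * ‖T x‖ := by linarith

lemma integrable_obj (hP2 : Integrable (fun x => ‖x‖ ^ 2) P)
    {φf : EuclideanSpace ℝ (Fin d) → ℝ} {gf : EuclideanSpace ℝ (Fin d) → EuclideanSpace ℝ (Fin d)}
    {l₀ : ℝ} (hl₀ : 0 ≤ l₀)
    (hg : ∀ v, HasGradientAt φf (gf v) v)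
    (hlip : ∀ v w, ‖gf v - gf w‖ ≤ l₀ * ‖v - w‖)
    {γ : ℝ} (hγ : 0 < γ)
    {T : EuclideanSpace ℝ (Fin d) → EuclideanSpace ℝ (Fin d)} (hT : MemLp T 2 P) :
    Integrable (fun x => φf (T x) - ‖T x - x‖ ^ 2 / (2 * γ)) P := by
  have hTint : Integrable T P := hT.integrable one_le_two
  have hT2 : Integrable (fun x => ‖T x‖ ^ 2) P :=
    (memLp_two_iff_integrable_sq_norm hT.aestronglyMeasurable).1 hT
  have hbound : ∀ v, |φf v| ≤ |φf 0| + ‖gf 0‖ * ‖v‖ + l₀ / 2 * ‖v‖ ^ 2 := by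
    intro v
    have hup := taylor_upper hg hlip 0 v
    have hlo := taylor_lower hg hlip 0 v
    rw [sub_zero] at hup hlo
    have hi : |(inner ℝ (gf 0) v : ℝ)| ≤ ‖gf 0‖ * ‖v‖ := abs_real_inner_le_norm _ _
    rw [abs_le] at hi ⊢
    constructor
    · have : -|φf 0| ≤ φf 0 := neg_abs_le _
      nlinarith
    · have : φf 0 ≤ |φf 0| := le_abs_self _
      nlinarith
  have hcontφ : Continuous φf := by
    rw [continuous_iff_continuousAt]
    exact fun v => (hg v).hasFDerivAt.differentiableAt.continuousAt
  have h1 : Integrable (fun x => φf (T x)) P := by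
    apply Integrable.mono'
      (((integrable_const |φf 0|).add (hTint.norm.const_mul ‖gf 0‖)).add
        (hT2.const_mul (l₀ / 2)))
    · exact hcontφ.comp_aestronglyMeasurable hT.aestronglyMeasurable
    · refine Filter.Eventually.of_forall fun x => ?_
      have := hbound (T x)
      calc ‖φf (T x)‖ = |φf (T x)| := rfl
        _ ≤ |φf 0| + ‖gf 0‖ * ‖T x‖ + l₀ / 2 * ‖T x‖ ^ 2 := this
        _ = |φf 0| + ‖gf 0‖ * ‖T x‖ + l₀ / 2 * ‖T x‖ ^ 2 := rfl
  have hid : MemLp (fun x : EuclideanSpace ℝ (Fin d) => x) 2 P :=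
    (memLp_two_iff_integrable_sq_norm aestronglyMeasurable_id).2 hP2
  have hsub : MemLp (fun x => T x - x) 2 P := hT.sub hid
  have h2 : Integrable (fun x => ‖T x - x‖ ^ 2) P :=
    (memLp_two_iff_integrable_sq_norm hsub.aestronglyMeasurable).1 hsub
  have h3 : Integrable (fun x => ‖T x - x‖ ^ 2 / (2 * γ)) P := h2.div_const _
  exact h1.sub h3

end MeasurePart

end Aux

/-- The value function `φ(θ) := sup_{T ∈ L²(P)} L(θ,T)`, where
`L(θ,T) = E_{x∼P}[ℓ(θ,T(x)) − ‖T(x)−x‖²/(2γ)]`. -/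
def phiSup {d p : ℕ} (P : Measure (EuclideanSpace ℝ (Fin d))) (γ : ℝ)
    (ℓ : EuclideanSpace ℝ (Fin p) → EuclideanSpace ℝ (Fin d) → ℝ)
    (θ : EuclideanSpace ℝ (Fin p)) : ℝ :=
  sSup {y : ℝ | ∃ T : EuclideanSpace ℝ (Fin d) → EuclideanSpace ℝ (Fin d),
    MemLp T 2 P ∧ y = ∫ x, (ℓ θ (T x) - ‖T x - x‖ ^ 2 / (2 * γ)) ∂P}

/-- (Descent of the value function along the θ-step.) Under the
μ-PL-in-T assumption, with `L₁ = l(1+κ)`, `l = l₀ + 1/γ`, `κ = l/μ`: if `L₁·τ ≤ 1`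
and `θ' = θ − τ ∂_θL(θ,T)` for some `T ∈ L²(P)`, then
`φ(θ') − φ(θ) ≤ −(τ/2)‖∂φ(θ)‖² + (τ/2)‖∂_θL(θ,T) − ∂φ(θ)‖²`,
where `∂φ(θ) = E_{x∼P}[∂_θℓ(θ,v*(θ;x))]`. -/
theorem value_function_descent_theta_step
    {d p : ℕ} (P : Measure (EuclideanSpace ℝ (Fin d))) [IsProbabilityMeasure P]
    (hP2 : Integrable (fun x => ‖x‖ ^ 2) P)
    (ℓ : EuclideanSpace ℝ (Fin p) → EuclideanSpace ℝ (Fin d) → ℝ)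
    (gθ : EuclideanSpace ℝ (Fin p) → EuclideanSpace ℝ (Fin d) → EuclideanSpace ℝ (Fin p))
    (gv : EuclideanSpace ℝ (Fin p) → EuclideanSpace ℝ (Fin d) → EuclideanSpace ℝ (Fin d))
    (l₀ γ μ : ℝ) (hl₀ : 0 ≤ l₀) (hγ : 0 < γ) (hμ : 0 < μ)
    (hgθ : ∀ θ v, HasGradientAt (fun θ' => ℓ θ' v) (gθ θ v) θ)
    (hgv : ∀ θ v, HasGradientAt (fun v' => ℓ θ v') (gv θ v) v)
    (hsmooth : ∀ θ v θ' v',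
      Real.sqrt (‖gθ θ' v' - gθ θ v‖ ^ 2 + ‖gv θ' v' - gv θ v‖ ^ 2)
        ≤ l₀ * Real.sqrt (‖θ' - θ‖ ^ 2 + ‖v' - v‖ ^ 2))
    (vstar : EuclideanSpace ℝ (Fin p) → EuclideanSpace ℝ (Fin d) → EuclideanSpace ℝ (Fin d))
    (hmax : ∀ θ, ∀ᵐ x ∂P, ∀ v,
      ℓ θ v - ‖v - x‖ ^ 2 / (2 * γ) ≤ ℓ θ (vstar θ x) - ‖vstar θ x - x‖ ^ 2 / (2 * γ))
    (huniq : ∀ θ, ∀ᵐ x ∂P, ∀ v,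
      (∀ w, ℓ θ w - ‖w - x‖ ^ 2 / (2 * γ) ≤ ℓ θ v - ‖v - x‖ ^ 2 / (2 * γ)) → v = vstar θ x)
    (hPL : ∀ θ, ∀ᵐ x ∂P, ∀ v,
      μ * ((ℓ θ (vstar θ x) - ‖vstar θ x - x‖ ^ 2 / (2 * γ)) - (ℓ θ v - ‖v - x‖ ^ 2 / (2 * γ)))
        ≤ (1 / 2) * ‖gv θ v - γ⁻¹ • (v - x)‖ ^ 2)
    (hvstar : ∀ θ, MemLp (vstar θ) 2 P)
    (τ : ℝ) (hτpos : 0 < τ)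
    (hτ : (l₀ + γ⁻¹) * (1 + (l₀ + γ⁻¹) / μ) * τ ≤ 1)
    (θ : EuclideanSpace ℝ (Fin p))
    (T : EuclideanSpace ℝ (Fin d) → EuclideanSpace ℝ (Fin d)) (hT : MemLp T 2 P)
    (θ' : EuclideanSpace ℝ (Fin p)) (hθ' : θ' = θ - τ • (∫ x, gθ θ (T x) ∂P)) :
    phiSup P γ ℓ θ' - phiSup P γ ℓ θ
      ≤ -(τ / 2) * ‖∫ x, gθ θ (vstar θ x) ∂P‖ ^ 2
        + (τ / 2) * ‖(∫ x, gθ θ (T x) ∂P) - (∫ x, gθ θ (vstar θ x) ∂P)‖ ^ 2 := by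
  -- smoothness consequences in v
  have hgvv : ∀ a v w, ‖gv a v - gv a w‖ ≤ l₀ * ‖v - w‖ := by
    intro a v w
    calc ‖gv a v - gv a w‖
        ≤ Real.sqrt (‖gθ a v - gθ a w‖ ^ 2 + ‖gv a v - gv a w‖ ^ 2) :=
          right_le_sqrt_add_sq _ (norm_nonneg _)
      _ ≤ l₀ * Real.sqrt (‖a - a‖ ^ 2 + ‖v - w‖ ^ 2) := hsmooth a w a v
      _ = l₀ * ‖v - w‖ := by rw [sub_self, norm_zero]; norm_num [Real.sqrt_sq (norm_nonneg _)]
  have hgθv : ∀ a v w, ‖gθ a v - gθ a w‖ ≤ l₀ * ‖v - w‖ := by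
    intro a v w
    calc ‖gθ a v - gθ a w‖
        ≤ Real.sqrt (‖gθ a v - gθ a w‖ ^ 2 + ‖gv a v - gv a w‖ ^ 2) :=
          left_le_sqrt_add_sq _ (norm_nonneg _)
      _ ≤ l₀ * Real.sqrt (‖a - a‖ ^ 2 + ‖v - w‖ ^ 2) := hsmooth a w a v
      _ = l₀ * ‖v - w‖ := by rw [sub_self, norm_zero]; norm_num [Real.sqrt_sq (norm_nonneg _)]
  -- integrability of objectives
  have hint : ∀ (a : EuclideanSpace ℝ (Fin p))
      (T' : EuclideanSpace ℝ (Fin d) → EuclideanSpace ℝ (Fin d)), MemLp T' 2 P →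
      Integrable (fun x => ℓ a (T' x) - ‖T' x - x‖ ^ 2 / (2 * γ)) P :=
    fun a T' hT' => integrable_obj P hP2 hl₀ (hgv a) (hgvv a) hγ hT'
  -- the value function is attained at vstar
  have hphi : ∀ a : EuclideanSpace ℝ (Fin p),
      phiSup P γ ℓ a = ∫ x, (ℓ a (vstar a x) - ‖vstar a x - x‖ ^ 2 / (2 * γ)) ∂P := by
    intro a
    apply IsGreatest.csSup_eq
    constructor
    · exact ⟨vstar a, hvstar a, rfl⟩
    · rintro y ⟨T', hT', rfl⟩
      apply integral_mono_ae (hint a T' hT') (hint a (vstar a) (hvstar a))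
      filter_upwards [hmax a] with x hx using hx (T' x)
  -- pointwise a.e. key bound coming from the segment lemma
  have hkey : ∀ᵐ x ∂P,
      (ℓ θ' (vstar θ' x) - ‖vstar θ' x - x‖ ^ 2 / (2 * γ))
        - (ℓ θ (vstar θ x) - ‖vstar θ x - x‖ ^ 2 / (2 * γ))
      ≤ inner ℝ (gθ θ (vstar θ x)) (θ' - θ) + l₀ * (1 + l₀ / μ) / 2 * ‖θ' - θ‖ ^ 2 := by
    have hall : ∀ᵐ x ∂P, ∀ n i : ℕ,
        (∀ v, ℓ (θ + ((i : ℝ) / (n : ℝ)) • (θ' - θ)) v - ‖v - x‖ ^ 2 / (2 * γ)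
          ≤ ℓ (θ + ((i : ℝ) / (n : ℝ)) • (θ' - θ)) (vstar (θ + ((i : ℝ) / (n : ℝ)) • (θ' - θ)) x)
            - ‖vstar (θ + ((i : ℝ) / (n : ℝ)) • (θ' - θ)) x - x‖ ^ 2 / (2 * γ)) ∧
        (∀ v, (∀ w, ℓ (θ + ((i : ℝ) / (n : ℝ)) • (θ' - θ)) w - ‖w - x‖ ^ 2 / (2 * γ)
            ≤ ℓ (θ + ((i : ℝ) / (n : ℝ)) • (θ' - θ)) v - ‖v - x‖ ^ 2 / (2 * γ))
          → v = vstar (θ + ((i : ℝ) / (n : ℝ)) • (θ' - θ)) x) ∧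
        (∀ v, μ * ((ℓ (θ + ((i : ℝ) / (n : ℝ)) • (θ' - θ))
              (vstar (θ + ((i : ℝ) / (n : ℝ)) • (θ' - θ)) x)
            - ‖vstar (θ + ((i : ℝ) / (n : ℝ)) • (θ' - θ)) x - x‖ ^ 2 / (2 * γ))
            - (ℓ (θ + ((i : ℝ) / (n : ℝ)) • (θ' - θ)) v - ‖v - x‖ ^ 2 / (2 * γ)))
          ≤ 1 / 2 * ‖gv (θ + ((i : ℝ) / (n : ℝ)) • (θ' - θ)) v - γ⁻¹ • (v - x)‖ ^ 2) := by
      rw [ae_all_iff]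
      intro n
      rw [ae_all_iff]
      intro i
      filter_upwards [hmax (θ + ((i : ℝ) / (n : ℝ)) • (θ' - θ)),
        huniq (θ + ((i : ℝ) / (n : ℝ)) • (θ' - θ)),
        hPL (θ + ((i : ℝ) / (n : ℝ)) • (θ' - θ))] with x h1 h2 h3
      exact ⟨h1, h2, h3⟩
    filter_upwards [hall] with x hx
    exact hstar_segment_bound ℓ gθ gv γ l₀ μ hl₀ hγ hμ hgθ hgv hsmooth x
      (fun a => vstar a x) θ θ'
      {a | (∀ v, ℓ a v - ‖v - x‖ ^ 2 / (2 * γ) ≤ ℓ a (vstar a x) - ‖vstar a x - x‖ ^ 2 / (2 * γ)) ∧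
        (∀ v, (∀ w, ℓ a w - ‖w - x‖ ^ 2 / (2 * γ) ≤ ℓ a v - ‖v - x‖ ^ 2 / (2 * γ))
          → v = vstar a x) ∧
        (∀ v, μ * ((ℓ a (vstar a x) - ‖vstar a x - x‖ ^ 2 / (2 * γ))
            - (ℓ a v - ‖v - x‖ ^ 2 / (2 * γ))) ≤ 1 / 2 * ‖gv a v - γ⁻¹ • (v - x)‖ ^ 2)}
      (fun a ha => ha.1) (fun a ha => ha.2.1) (fun a ha => ha.2.2)
      (fun n i hi => hx n i)
  -- integrate the key bound
  have hGstarInt : Integrable (fun x => gθ θ (vstar θ x)) P :=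
    integrable_gcomp P hl₀ (hgθv θ) (hvstar θ)
  have hIθ : Integrable (fun x => ℓ θ (vstar θ x) - ‖vstar θ x - x‖ ^ 2 / (2 * γ)) P :=
    hint θ _ (hvstar θ)
  have hIθ' : Integrable (fun x => ℓ θ' (vstar θ' x) - ‖vstar θ' x - x‖ ^ 2 / (2 * γ)) P :=
    hint θ' _ (hvstar θ')
  have hInner : Integrable (fun x => (inner ℝ (gθ θ (vstar θ x)) (θ' - θ) : ℝ)) P :=
    hGstarInt.inner_const _
  have hmono : ∫ x, ((ℓ θ' (vstar θ' x) - ‖vstar θ' x - x‖ ^ 2 / (2 * γ))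
        - (ℓ θ (vstar θ x) - ‖vstar θ x - x‖ ^ 2 / (2 * γ))) ∂P
      ≤ ∫ x, ((inner ℝ (gθ θ (vstar θ x)) (θ' - θ) : ℝ)
        + l₀ * (1 + l₀ / μ) / 2 * ‖θ' - θ‖ ^ 2) ∂P :=
    integral_mono_ae (hIθ'.sub hIθ)
      (hInner.add (integrable_const (l₀ * (1 + l₀ / μ) / 2 * ‖θ' - θ‖ ^ 2))) hkey
  rw [integral_sub hIθ' hIθ, integral_add hInner
    (integrable_const (l₀ * (1 + l₀ / μ) / 2 * ‖θ' - θ‖ ^ 2)), integral_const] at hmono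
  simp only [probReal_univ, measure_univ, ENNReal.toReal_one, one_smul, smul_eq_mul, one_mul] at hmono
  have hinner_int : ∫ x, (inner ℝ (gθ θ (vstar θ x)) (θ' - θ) : ℝ) ∂P
      = inner ℝ (∫ x, gθ θ (vstar θ x) ∂P) (θ' - θ) := by
    have e : (fun x => (inner ℝ (gθ θ (vstar θ x)) (θ' - θ) : ℝ))
        = fun x => (inner ℝ (θ' - θ) (gθ θ (vstar θ x)) : ℝ) :=
      funext fun x => real_inner_comm _ _
    rw [e, integral_inner hGstarInt (θ' - θ)]
    exact real_inner_comm _ _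
  rw [hinner_int] at hmono
  rw [hphi θ', hphi θ]
  refine hmono.trans ?_
  -- final arithmetic
  have hδ : θ' - θ = -(τ • (∫ x, gθ θ (T x) ∂P)) := by rw [hθ']; abel
  rw [hδ, inner_neg_right, real_inner_smul_right, norm_neg, norm_smul, Real.norm_eq_abs,
    abs_of_pos hτpos, mul_pow, norm_sub_sq_real]
  have hL1 : l₀ * (1 + l₀ / μ) * τ ≤ 1 := by
    refine le_trans ?_ hτ
    have hγi : (0 : ℝ) < γ⁻¹ := inv_pos.2 hγ
    have hmono2 : l₀ * (1 + l₀ / μ) ≤ (l₀ + γ⁻¹) * (1 + (l₀ + γ⁻¹) / μ) := by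
      rw [div_eq_mul_inv, div_eq_mul_inv]
      have hμi : (0 : ℝ) < μ⁻¹ := inv_pos.2 hμ
      nlinarith [mul_nonneg (mul_nonneg hl₀ hγi.le) hμi.le,
        mul_nonneg (mul_nonneg hγi.le hγi.le) hμi.le]
    exact mul_le_mul_of_nonneg_right hmono2 hτpos.le
  have hGn : (0 : ℝ) ≤ ‖∫ x, gθ θ (T x) ∂P‖ ^ 2 := sq_nonneg _
  have hquad : l₀ * (1 + l₀ / μ) / 2 * (τ ^ 2 * ‖∫ x, gθ θ (T x) ∂P‖ ^ 2)
      ≤ τ / 2 * ‖∫ x, gθ θ (T x) ∂P‖ ^ 2 := by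
    nlinarith [mul_le_mul_of_nonneg_right hL1 (mul_nonneg hτpos.le hGn)]
  have hcomm : (inner ℝ (∫ x, gθ θ (vstar θ x) ∂P) (∫ x, gθ θ (T x) ∂P) : ℝ)
      = inner ℝ (∫ x, gθ θ (T x) ∂P) (∫ x, gθ θ (vstar θ x) ∂P) := real_inner_comm _ _
  nlinarith [hquad]
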